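/- For all integers m ≥ 1 and n ≥ 1, F_{m+n} = F_m · F_n + Σ_{i=2}^{k} Σ_{j=1}^{i−1} z_i · q^{C(i,2)} · F_{m−j} · F_{n−i+j}, where C(i,2) = i(i−1)/2 and the double sum is restricted to those pairs (i,j) with j ≤ m and i−j ≤ n. -/

import Mathlib

/-- The generating polynomial of the inversion statistic over reverse layered
permutations of `{1,…,n}` with layers of length at most `k`: the sum over all
compositions `c = (c_1,…,c_m)` of `n` with parts in `{1,…,k}` of
`∏_{j=1}^m z_{c_j} q^{C(c_j,2)}`. -/
def rinvGenPoly {R : Type*} [CommRing R] (k : ℕ) (q : R) (z : ℕ → R) (n : ℕ) : R :=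
  ∑ c ∈ Finset.univ.filter (fun c : Composition n => ∀ i ∈ c.blocks, i ≤ k),
    ∏ j ∈ Finset.range c.length,
      z (c.blocks.getD j 0) * q ^ Nat.choose (c.blocks.getD j 0) 2

namespace RinvAux

theorem addition_core {R : Type*} [CommRing R] (k : ℕ) (hk : 2 ≤ k) (w : ℕ → R) (F : ℕ → R)
    (hF0 : F 0 = 1)
    (hFrec : ∀ N, 1 ≤ N → F N = ∑ i ∈ Finset.Icc 1 k, if i ≤ N then w i * F (N - i) else 0) :
    ∀ m, 1 ≤ m → ∀ n, 1 ≤ n →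
      F (m + n) = F m * F n + ∑ i ∈ Finset.Icc 2 k, ∑ j ∈ Finset.Icc 1 (i - 1),
        if j ≤ m ∧ i - j ≤ n then w i * F (m - j) * F (n + j - i) else 0 := by
  intro m
  induction m using Nat.strong_induction_on with
  | _ m IH =>
  intro hm n hn
  rw [hFrec (m + n) (by omega)]
  have hsplit : ∀ i ∈ Finset.Icc 1 k,
      (if i ≤ m + n then w i * F (m + n - i) else 0)
        = (if i ≤ m - 1 then w i * F ((m - i) + n) else 0)
          + (if m ≤ i ∧ i - m ≤ n then w i * F (n - (i - m)) else 0) := by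
    intro i hi
    rw [Finset.mem_Icc] at hi
    by_cases h : i ≤ m - 1
    · rw [if_pos (by omega), if_pos h, if_neg (by omega),
        show m + n - i = (m - i) + n by omega, add_zero]
    · by_cases h2 : i ≤ m + n
      · rw [if_pos h2, if_neg h, if_pos (by constructor <;> omega),
          show m + n - i = n - (i - m) by omega, zero_add]
      · rw [if_neg h2, if_neg h, if_neg (by omega), add_zero]
  rw [Finset.sum_congr rfl hsplit, Finset.sum_add_distrib]
  have hIH : ∀ i ∈ Finset.Icc 1 k,
      (if i ≤ m - 1 then w i * F ((m - i) + n) else 0)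
        = (if i ≤ m - 1 then w i * (F (m - i) * F n) else 0)
          + (if i ≤ m - 1 then w i * (∑ i' ∈ Finset.Icc 2 k, ∑ j ∈ Finset.Icc 1 (i' - 1),
              if j ≤ m - i ∧ i' - j ≤ n then w i' * F (m - i - j) * F (n + j - i') else 0)
              else 0) := by
    intro i hi
    rw [Finset.mem_Icc] at hi
    by_cases h : i ≤ m - 1
    · rw [if_pos h, if_pos h, if_pos h, IH (m - i) (by omega) (by omega) n hn, mul_add]
    · rw [if_neg h, if_neg h, if_neg h, add_zero]
  rw [Finset.sum_congr rfl hIH, Finset.sum_add_distrib]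
  have hA1 : (∑ i ∈ Finset.Icc 1 k, if i ≤ m - 1 then w i * (F (m - i) * F n) else 0)
      + (if m ≤ k then w m * F n else 0) = F m * F n := by
    rw [hFrec m hm, Finset.sum_mul]
    have h1 : ∀ i ∈ Finset.Icc 1 k,
        (if i ≤ m then w i * F (m - i) else 0) * F n
          = (if i ≤ m - 1 then w i * (F (m - i) * F n) else 0)
            + (if i = m then w i * F n else 0) := by
      intro i hi
      rw [Finset.mem_Icc] at hi
      by_cases h : i ≤ m - 1
      · rw [if_pos (by omega), if_pos h, if_neg (by omega), add_zero]; ring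
      · by_cases h2 : i = m
        · subst h2
          rw [if_pos le_rfl, if_neg h, if_pos rfl, Nat.sub_self, hF0, zero_add]; ring
        · rw [if_neg (by omega), if_neg h, if_neg h2, add_zero, zero_mul]
    rw [Finset.sum_congr rfl h1, Finset.sum_add_distrib,
      Finset.sum_ite_eq' (Finset.Icc 1 k) m (fun i => w i * F n)]
    simp only [Finset.mem_Icc]
    congr 1
    split_ifs <;> first | rfl | omega
  have hB : ∀ i ∈ Finset.Icc 1 k,
      (if m ≤ i ∧ i - m ≤ n then w i * F (n - (i - m)) else 0)
        = (if i = m then w i * F n else 0)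
          + (if m + 1 ≤ i ∧ i - m ≤ n then w i * F (n + m - i) else 0) := by
    intro i hi
    rw [Finset.mem_Icc] at hi
    by_cases h : i = m
    · subst h
      rw [if_pos ⟨le_rfl, by omega⟩, if_pos rfl, if_neg (by omega), add_zero,
        Nat.sub_self, Nat.sub_zero]
    · by_cases h2 : m + 1 ≤ i ∧ i - m ≤ n
      · rw [if_pos ⟨by omega, h2.2⟩, if_neg h, if_pos h2, zero_add,
          show n - (i - m) = n + m - i by omega]
      · rw [if_neg (by omega), if_neg h, if_neg h2, add_zero]
  rw [Finset.sum_congr rfl hB, Finset.sum_add_distrib]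
  have hBm : (∑ i ∈ Finset.Icc 1 k, if i = m then w i * F n else 0)
      = (if m ≤ k then w m * F n else 0) := by
    rw [Finset.sum_ite_eq' (Finset.Icc 1 k) m (fun i => w i * F n)]
    simp only [Finset.mem_Icc]
    split_ifs <;> first | rfl | omega
  rw [hBm]
  have hB' : (∑ i ∈ Finset.Icc 1 k, if m + 1 ≤ i ∧ i - m ≤ n then w i * F (n + m - i) else 0)
      = ∑ i ∈ Finset.Icc 2 k, if m + 1 ≤ i ∧ i - m ≤ n then w i * F (n + m - i) else 0 := by
    rw [eq_comm]
    apply Finset.sum_subset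
    · intro x hx
      rw [Finset.mem_Icc] at hx ⊢
      omega
    · intro x hx hx2
      rw [Finset.mem_Icc] at hx
      rw [Finset.mem_Icc] at hx2
      rw [if_neg (by omega)]
  rw [hB']
  have hD : (∑ i ∈ Finset.Icc 2 k, ∑ j ∈ Finset.Icc 1 (i - 1),
        if j ≤ m ∧ i - j ≤ n then w i * F (m - j) * F (n + j - i) else 0)
      = (∑ i ∈ Finset.Icc 2 k, ∑ j ∈ Finset.Icc 1 (i - 1),
          if j ≤ m - 1 ∧ i - j ≤ n then w i * F (m - j) * F (n + j - i) else 0)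
        + (∑ i ∈ Finset.Icc 2 k, if m + 1 ≤ i ∧ i - m ≤ n then w i * F (n + m - i) else 0) := by
    rw [← Finset.sum_add_distrib]
    apply Finset.sum_congr rfl
    intro i hi
    rw [Finset.mem_Icc] at hi
    have h1 : ∀ j ∈ Finset.Icc 1 (i - 1),
        (if j ≤ m ∧ i - j ≤ n then w i * F (m - j) * F (n + j - i) else 0)
          = (if j ≤ m - 1 ∧ i - j ≤ n then w i * F (m - j) * F (n + j - i) else 0)
            + (if j = m then (if i - m ≤ n then w i * F (n + m - i) else 0) else 0) := by
      intro j hj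
      rw [Finset.mem_Icc] at hj
      by_cases hjm : j = m
      · subst hjm
        rw [if_pos rfl, if_neg (show ¬(j ≤ j - 1 ∧ i - j ≤ n) by omega), zero_add]
        by_cases h2 : i - j ≤ n
        · rw [if_pos ⟨le_rfl, h2⟩, if_pos h2, Nat.sub_self, hF0]
          ring
        · rw [if_neg (by omega), if_neg h2]
      · rw [if_neg hjm, add_zero]
        by_cases h2 : j ≤ m - 1 ∧ i - j ≤ n
        · rw [if_pos ⟨by omega, h2.2⟩, if_pos h2]
        · rw [if_neg (by omega), if_neg h2]
    rw [Finset.sum_congr rfl h1, Finset.sum_add_distrib,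
      Finset.sum_ite_eq' (Finset.Icc 1 (i - 1)) m
        (fun _ => if i - m ≤ n then w i * F (n + m - i) else 0)]
    simp only [Finset.mem_Icc]
    congr 1
    split_ifs <;> first | rfl | omega
  rw [hD]
  have hA2 : (∑ i ∈ Finset.Icc 1 k, if i ≤ m - 1 then
        w i * (∑ i' ∈ Finset.Icc 2 k, ∑ j ∈ Finset.Icc 1 (i' - 1),
          if j ≤ m - i ∧ i' - j ≤ n then w i' * F (m - i - j) * F (n + j - i') else 0) else 0)
      = ∑ i' ∈ Finset.Icc 2 k, ∑ j ∈ Finset.Icc 1 (i' - 1),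
          if j ≤ m - 1 ∧ i' - j ≤ n then w i' * F (m - j) * F (n + j - i') else 0 := by
    have step1 : ∀ i ∈ Finset.Icc 1 k,
        (if i ≤ m - 1 then
          w i * (∑ i' ∈ Finset.Icc 2 k, ∑ j ∈ Finset.Icc 1 (i' - 1),
            if j ≤ m - i ∧ i' - j ≤ n then w i' * F (m - i - j) * F (n + j - i') else 0) else 0)
          = ∑ i' ∈ Finset.Icc 2 k, ∑ j ∈ Finset.Icc 1 (i' - 1),
              (if i ≤ m - 1 ∧ j ≤ m - i ∧ i' - j ≤ n then
                w i * (w i' * F (m - i - j) * F (n + j - i')) else 0) := by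
      intro i hi
      by_cases h : i ≤ m - 1
      · rw [if_pos h, Finset.mul_sum]
        apply Finset.sum_congr rfl
        intro i' _
        rw [Finset.mul_sum]
        apply Finset.sum_congr rfl
        intro j _
        by_cases hc2 : j ≤ m - i ∧ i' - j ≤ n
        · rw [if_pos hc2, if_pos ⟨h, hc2⟩]
        · rw [if_neg hc2, if_neg (by tauto), mul_zero]
      · rw [if_neg h, eq_comm]
        apply Finset.sum_eq_zero
        intro i' _
        apply Finset.sum_eq_zero
        intro j _
        rw [if_neg (by tauto)]
    rw [Finset.sum_congr rfl step1, Finset.sum_comm]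
    apply Finset.sum_congr rfl
    intro i' hi'
    rw [Finset.mem_Icc] at hi'
    rw [Finset.sum_comm]
    apply Finset.sum_congr rfl
    intro j hj
    rw [Finset.mem_Icc] at hj
    by_cases hc : j ≤ m - 1 ∧ i' - j ≤ n
    · rw [if_pos hc, hFrec (m - j) (by omega), Finset.mul_sum, Finset.sum_mul]
      apply Finset.sum_congr rfl
      intro i hi
      rw [Finset.mem_Icc] at hi
      by_cases h2 : i ≤ m - j
      · rw [if_pos h2, if_pos ⟨by omega, by omega, hc.2⟩,
          show m - i - j = m - j - i by omega]
        ring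
      · rw [if_neg h2, if_neg (by omega)]
        ring
    · rw [if_neg hc]
      apply Finset.sum_eq_zero
      intro i hi
      rw [Finset.mem_Icc] at hi
      rw [if_neg (by omega)]
  rw [hA2, ← hA1]
  ring


lemma prod_range_getD {R : Type*} [CommRing R] (g : ℕ → R) (l : List ℕ) :
    ∏ j ∈ Finset.range l.length, g (l.getD j 0) = (l.map g).prod := by
  induction l with
  | nil => simp
  | cons a t ih =>
    rw [List.length_cons, Finset.prod_range_succ', List.map_cons, List.prod_cons]
    simp only [List.getD_cons_succ, List.getD_cons_zero, ih, mul_comm]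

lemma rinv_eq_sum_map {R : Type*} [CommRing R] (k : ℕ) (q : R) (z : ℕ → R) (n : ℕ) :
    rinvGenPoly k q z n =
      ∑ c ∈ Finset.univ.filter (fun c : Composition n => ∀ i ∈ c.blocks, i ≤ k),
        (c.blocks.map (fun b => z b * q ^ Nat.choose b 2)).prod := by
  unfold rinvGenPoly
  refine Finset.sum_congr rfl fun c _ => ?_
  rw [← prod_range_getD, ← Composition.blocks_length]

lemma blocks_ne_nil {N : ℕ} (hN : 1 ≤ N) (c : Composition N) : c.blocks ≠ [] := by
  intro h
  have := c.blocks_sum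
  rw [h] at this
  simp at this
  omega

lemma headI_mem {l : List ℕ} (h : l ≠ []) : l.headI ∈ l := by
  cases l with
  | nil => simp at h
  | cons a t => simp

lemma headI_le_sum (l : List ℕ) : l.headI ≤ l.sum := by
  cases l with
  | nil => simp
  | cons a t => simp [List.sum_cons]

lemma headI_cons_tail {l : List ℕ} (h : l ≠ []) : l.headI :: l.tail = l := by
  cases l with
  | nil => simp at h
  | cons a t => rfl

/-- Prepend a block to a composition. -/
def consC {M N : ℕ} (i : ℕ) (hi : 0 < i) (h : i + M = N) (d : Composition M) : Composition N :=
  ⟨i :: d.blocks, by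
    intro j hj
    rcases List.mem_cons.1 hj with rfl | hj
    · exact hi
    · exact d.blocks_pos hj, by rw [List.sum_cons, d.blocks_sum, h]⟩

/-- Remove the first block of a composition. -/
def tailC {N : ℕ} (c : Composition N) : Composition (N - c.blocks.headI) :=
  ⟨c.blocks.tail, fun hj => c.blocks_pos (List.mem_of_mem_tail hj), by
    have h := c.blocks_sum
    cases hb : c.blocks with
    | nil => simp [hb] at h ⊢; omega
    | cons a t => rw [hb, List.sum_cons] at h; simp [hb]; omega⟩

lemma blocks_nil_of_zero (c : Composition 0) : c.blocks = [] := by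
  have h := c.blocks_sum
  cases hb : c.blocks with
  | nil => rfl
  | cons a t =>
    exfalso
    have ha : 0 < a := c.blocks_pos (by rw [hb]; exact List.mem_cons_self (a := a) (l := t))
    rw [hb, List.sum_cons] at h
    omega

lemma rinv_zero {R : Type*} [CommRing R] (k : ℕ) (q : R) (z : ℕ → R) :
    rinvGenPoly k q z 0 = 1 := by
  rw [rinv_eq_sum_map]
  rw [Finset.filter_true_of_mem (fun c _ => by
    intro i hi; rw [blocks_nil_of_zero c] at hi; simp at hi)]
  haveI : Unique (Composition 0) :=
    ⟨⟨Composition.ones 0⟩, fun c => by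
      apply Composition.ext
      rw [blocks_nil_of_zero, blocks_nil_of_zero]⟩
  rw [Finset.univ_unique, Finset.sum_singleton, blocks_nil_of_zero]
  simp

lemma rinv_rec {R : Type*} [CommRing R] (k : ℕ) (q : R) (z : ℕ → R) (N : ℕ) (hN : 1 ≤ N) :
    rinvGenPoly k q z N = ∑ i ∈ Finset.Icc 1 k,
      if i ≤ N then z i * q ^ Nat.choose i 2 * rinvGenPoly k q z (N - i) else 0 := by
  classical
  rw [rinv_eq_sum_map, ← Finset.sum_filter]
  simp only [rinv_eq_sum_map, Finset.mul_sum]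
  rw [Finset.sum_sigma' (Finset.filter (· ≤ N) (Finset.Icc 1 k))
    (fun i => Finset.filter (fun c : Composition (N - i) => ∀ j ∈ c.blocks, j ≤ k) Finset.univ)
    (fun i c => z i * q ^ i.choose 2 * (c.blocks.map (fun b => z b * q ^ b.choose 2)).prod)]
  refine Finset.sum_nbij' (fun c => ⟨c.blocks.headI, tailC c⟩)
    (fun p => if h : 0 < p.1 ∧ p.1 ≤ N then consC p.1 h.1 (Nat.add_sub_cancel' h.2) p.2
      else Composition.ones N) ?_ ?_ ?_ ?_ ?_
  · intro c hc
    rw [Finset.mem_filter] at hc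
    have hne := blocks_ne_nil hN c
    rw [Finset.mem_sigma]
    constructor
    · rw [Finset.mem_filter, Finset.mem_Icc]
      refine ⟨⟨c.blocks_pos (headI_mem hne), hc.2 _ (headI_mem hne)⟩, ?_⟩
      calc c.blocks.headI ≤ c.blocks.sum := headI_le_sum _
        _ = N := c.blocks_sum
    · rw [Finset.mem_filter]
      exact ⟨Finset.mem_univ _, fun i hi => hc.2 i (List.mem_of_mem_tail hi)⟩
  · intro p hp
    rw [Finset.mem_sigma, Finset.mem_filter, Finset.mem_Icc, Finset.mem_filter] at hp
    have hcond : 0 < p.1 ∧ p.1 ≤ N := ⟨hp.1.1.1, hp.1.2⟩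
    beta_reduce
    rw [dif_pos hcond, Finset.mem_filter]
    refine ⟨Finset.mem_univ _, fun i hi => ?_⟩
    rcases List.mem_cons.1 hi with rfl | hi
    · exact hp.1.1.2
    · exact hp.2.2 i hi
  · intro c hc
    rw [Finset.mem_filter] at hc
    have hne := blocks_ne_nil hN c
    have hcond : 0 < c.blocks.headI ∧ c.blocks.headI ≤ N :=
      ⟨c.blocks_pos (headI_mem hne), by
        calc c.blocks.headI ≤ c.blocks.sum := headI_le_sum _
          _ = N := c.blocks_sum⟩
    beta_reduce
    rw [dif_pos hcond]
    exact Composition.ext (headI_cons_tail hne)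
  · intro p hp
    rw [Finset.mem_sigma, Finset.mem_filter, Finset.mem_Icc, Finset.mem_filter] at hp
    have hcond : 0 < p.1 ∧ p.1 ≤ N := ⟨hp.1.1.1, hp.1.2⟩
    beta_reduce
    rw [dif_pos hcond]
    refine Sigma.ext rfl (heq_of_eq (Composition.ext ?_))
    rfl
  · intro c hc
    rw [Finset.mem_filter] at hc
    have hne := blocks_ne_nil hN c
    conv_lhs => rw [← headI_cons_tail hne]
    rw [List.map_cons, List.prod_cons]
    rfl

end RinvAux


theorem rinvGenPoly_addition_formula {R : Type*} [CommRing R] (k : ℕ) (hk : 2 ≤ k)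
    (q : R) (z : ℕ → R) (m n : ℕ) (hm : 1 ≤ m) (hn : 1 ≤ n) :
    rinvGenPoly k q z (m + n)
      = rinvGenPoly k q z m * rinvGenPoly k q z n +
        ∑ i ∈ Finset.Icc 2 k, ∑ j ∈ Finset.Icc 1 (i - 1),
          if j ≤ m ∧ i - j ≤ n then
            z i * q ^ Nat.choose i 2 * rinvGenPoly k q z (m - j) * rinvGenPoly k q z (n + j - i)
          else 0 := by
  exact RinvAux.addition_core k hk (fun i => z i * q ^ Nat.choose i 2) (rinvGenPoly k q z)
    (RinvAux.rinv_zero k q z) (RinvAux.rinv_rec k q z) m hm n hn
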